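/- Let ν ∈ ℝ with ν² ≠ 1. The lattice equation with polynomial E(w,x,y,z) = (1+wx)(νz+y) - (1+yz)(νw+x), i.e. (1 + u_{n,m}u_{n+1,m})(ν u_{n+1,m+1} + u_{n,m+1}) = (1 + u_{n,m+1}u_{n+1,m+1})(ν u_{n,m} + u_{n+1,m}), admits the five-point generalized symmetry with generator g_{n,m} = ((u_{n,m}² - ν)(ν u_{n,m}² - 1)/u_{n,m})·(1/(u_{n,m+1}u_{n,m}-1) - 1/(u_{n,m}u_{n,m-1}-1)): for every solution u : ℤ × ℤ → ℝ of the equation satisfying u_{n,m} ≠ 0 and u_{n,m+1}u_{n,m} - 1 ≠ 0 for all (n,m), and every (n,m) ∈ ℤ², the linearized equation g_{n,m}·∂₁E + g_{n+1,m}·∂₂E + g_{n,m+1}·∂₃E + g_{n+1,m+1}·∂₄E = 0 holds, where each ∂ᵢE is evaluated at (u_{n,m}, u_{n+1,m}, u_{n,m+1}, u_{n+1,m+1}). -/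

import Mathlib

private lemma dE1 (ν x y z W : ℝ) : deriv (fun w : ℝ => (1+w*x)*(ν*z+y) - (1+y*z)*(ν*w+x)) W = x*(ν*z+y) - (1+y*z)*ν := by
  have H : HasDerivAt (fun w : ℝ => (1+w*x)*(ν*z+y) - (1+y*z)*(ν*w+x)) (x*(ν*z+y) - (1+y*z)*ν) W := by
    have h1 := (((hasDerivAt_id W).mul_const x).const_add (1:ℝ)).mul_const (ν*z+y)
    have h2 := (((hasDerivAt_id W).const_mul ν).add_const x).const_mul (1+y*z)
    convert h1.sub h2 using 1 <;> first | rfl | ring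
  exact H.deriv

private lemma dE2 (ν w y z W : ℝ) : deriv (fun x : ℝ => (1+w*x)*(ν*z+y) - (1+y*z)*(ν*w+x)) W = w*(ν*z+y) - (1+y*z) := by
  have H : HasDerivAt (fun x : ℝ => (1+w*x)*(ν*z+y) - (1+y*z)*(ν*w+x)) (w*(ν*z+y) - (1+y*z)) W := by
    have h1 := (((hasDerivAt_id W).const_mul w).const_add (1:ℝ)).mul_const (ν*z+y)
    have h2 := (((hasDerivAt_id W).const_add (ν*w))).const_mul (1+y*z)
    convert h1.sub h2 using 1 <;> first | rfl | ring
  exact H.deriv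

private lemma dE3 (ν w x z W : ℝ) : deriv (fun y : ℝ => (1+w*x)*(ν*z+y) - (1+y*z)*(ν*w+x)) W = (1+w*x) - z*(ν*w+x) := by
  have H : HasDerivAt (fun y : ℝ => (1+w*x)*(ν*z+y) - (1+y*z)*(ν*w+x)) ((1+w*x) - z*(ν*w+x)) W := by
    have h1 := ((hasDerivAt_id W).const_add (ν*z)).const_mul (1+w*x)
    have h2 := (((hasDerivAt_id W).mul_const z).const_add (1:ℝ)).mul_const (ν*w+x)
    convert h1.sub h2 using 1 <;> first | rfl | ring
  exact H.deriv

private lemma dE4 (ν w x y W : ℝ) : deriv (fun z : ℝ => (1+w*x)*(ν*z+y) - (1+y*z)*(ν*w+x)) W = ν*(1+w*x) - y*(ν*w+x) := by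
  have H : HasDerivAt (fun z : ℝ => (1+w*x)*(ν*z+y) - (1+y*z)*(ν*w+x)) (ν*(1+w*x) - y*(ν*w+x)) W := by
    have h1 := (((hasDerivAt_id W).const_mul ν).add_const y).const_mul (1+w*x)
    have h2 := (((hasDerivAt_id W).const_mul y).const_add (1:ℝ)).mul_const (ν*w+x)
    convert h1.sub h2 using 1 <;> first | rfl | ring
  exact H.deriv

set_option maxHeartbeats 2000000 in
theorem stmt_5
    (ν : ℝ) (hν : ν ^ 2 ≠ 1)
    (E : ℝ → ℝ → ℝ → ℝ → ℝ)
    (hE : ∀ w x y z : ℝ, E w x y z = (1 + w * x) * (ν * z + y) - (1 + y * z) * (ν * w + x))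
    (u : ℤ × ℤ → ℝ)
    (hu : ∀ n m : ℤ, E (u (n, m)) (u (n + 1, m)) (u (n, m + 1)) (u (n + 1, m + 1)) = 0)
    (hne0 : ∀ n m : ℤ, u (n, m) ≠ 0)
    (hne1 : ∀ n m : ℤ, u (n, m + 1) * u (n, m) - 1 ≠ 0)
    (g : ℤ × ℤ → ℝ)
    (hg : ∀ n m : ℤ, g (n, m) = (u (n, m) ^ 2 - ν) * (ν * u (n, m) ^ 2 - 1) / u (n, m) * (1 / (u (n, m + 1) * u (n, m) - 1) - 1 / (u (n, m) * u (n, m - 1) - 1)))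
    (n m : ℤ) :
    g (n, m) * deriv (fun w => E w (u (n + 1, m)) (u (n, m + 1)) (u (n + 1, m + 1))) (u (n, m))
      + g (n + 1, m) * deriv (fun x => E (u (n, m)) x (u (n, m + 1)) (u (n + 1, m + 1))) (u (n + 1, m))
      + g (n, m + 1) * deriv (fun y => E (u (n, m)) (u (n + 1, m)) y (u (n + 1, m + 1))) (u (n, m + 1))
      + g (n + 1, m + 1) * deriv (fun z => E (u (n, m)) (u (n + 1, m)) (u (n, m + 1)) z) (u (n + 1, m + 1)) = 0 := by
  simp only [hE]
  rw [dE1, dE2, dE3, dE4, hg n m, hg (n+1) m, hg n (m+1), hg (n+1) (m+1)]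
  rw [show m + 1 - 1 = m from by ring]
  -- quad equation hypotheses
  have h1 := hu n (m-1)
  have h2 := hu n m
  have h3 := hu n (m+1)
  rw [hE] at h1 h2 h3
  rw [show m - 1 + 1 = m from by ring] at h1
  -- nonzero facts
  have nC := hne0 n m
  have nD := hne0 (n+1) m
  have nE := hne0 n (m+1)
  have nF := hne0 (n+1) (m+1)
  have nEC := hne1 n m
  have nCA := hne1 n (m-1)
  rw [show m - 1 + 1 = m from by ring] at nCA
  have nFD := hne1 (n+1) m
  have nDB := hne1 (n+1) (m-1)
  rw [show m - 1 + 1 = m from by ring] at nDB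
  have nPE := hne1 n (m+1)
  have nQF := hne1 (n+1) (m+1)
  set A := u (n, m-1) with hA
  set B := u (n+1, m-1) with hB
  set C := u (n, m) with hC
  set D := u (n+1, m) with hD
  set Ee := u (n, m+1) with hEe
  set Ff := u (n+1, m+1) with hFf
  set P := u (n, m+1+1) with hP
  set Q := u (n+1, m+1+1) with hQ

  have hpast : (C^2-ν)*(ν*C^2-1)/C*(1/(C*A-1))*(D*(ν*Ff+Ee)-(1+Ee*Ff)*ν) + (D^2-ν)*(ν*D^2-1)/D*(1/(D*B-1))*(C*(ν*Ff+Ee)-(1+Ee*Ff)) = (D^2-ν)*(ν*D+C)*(C*(ν*Ff+Ee)-(1+Ee*Ff))/(C*D) := by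
    field_simp
    apply mul_left_cancel₀ (mul_ne_zero nC nD)
    linear_combination (1*C^2*D^4 + 1*C^2*D^4*Ee*Ff - 1*C^3*D^4*Ee - 1*ν*C^2*D^2 - 1*ν*C^2*D^2*Ee*Ff + 1*ν*C^3*D^2*Ee - 1*ν*C^3*D^4*Ff + 1*ν^2*C^3*D^2*Ff) * h1 + (1*C^3*D^3 - 1*B*C^3*D^4 - 1*ν*C*D^3 - 1*ν*C^4*D^2 + 1*ν*B*C*D^4 + 1*ν*B*C^4*D^3 + 1*ν^2*C^2*D^2 - 1*ν^2*B*C^2*D^3) * h2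
  have hfut : (Ee^2-ν)*(ν*Ee^2-1)/Ee*(1/(P*Ee-1))*((1+C*D)-Ff*(ν*C+D)) + (Ff^2-ν)*(ν*Ff^2-1)/Ff*(1/(Q*Ff-1))*(ν*(1+C*D)-Ee*(ν*C+D)) = (ν*Ff^2-1)*(ν*Ee+Ff)*(ν*(1+C*D)-Ee*(ν*C+D))/(Ee*Ff) := by
    have nPE' : Ee * P - 1 ≠ 0 := by rwa [mul_comm]
    have nQF' : Ff * Q - 1 ≠ 0 := by rwa [mul_comm]
    field_simp
    apply mul_left_cancel₀ (mul_ne_zero nE nF)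
    linear_combination (13*Ee*P^3 + 7*Ee*Ff*P^2 + 3*Ee*Ff^2*P + 1*Ee*Ff^3 + 1*Ee^2 - 4*Ee^2*P^4 - 3*Ee^2*Ff*P^3 - 2*Ee^2*Ff^2*P^2 - 1*Ee^2*Ff^3*P - 2*Ee^3*P - 1*Ee^3*Ff + 1*Ee^4*P^2 + 1*Ee^4*Ff*P + 1*Ee^4*Ff^2 - 13*D*P^3 - 7*D*Ff*P^2 - 3*D*Ff^2*P - 1*D*Ff^3 - 1*D*Ee + 4*D*Ee*P^4 - 10*D*Ee*Ff*P^3 - 5*D*Ee*Ff^2*P^2 - 2*D*Ee*Ff^3*P - 1*D*Ee*Ff^4 + 2*D*Ee^2*P + 4*D*Ee^2*Ff*P^4 + 3*D*Ee^2*Ff^2*P^3 + 2*D*Ee^2*Ff^3*P^2 + 1*D*Ee^2*Ff^4*P - 1*D*Ee^3*P^2 + 1*D*Ee^3*Ff*P + 1*D*Ee^3*Ff^2 - 1*D*Ee^4*Ff*P^2 - 1*D*Ee^4*Ff^2*P - 1*D*Ee^4*Ff^3 + 13*C*D*Ee*P^3 + 7*C*D*Ee*Ff*P^2 + 3*C*D*Ee*Ff^2*P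 + 1*C*D*Ee*Ff^3 + 1*C*D*Ee^2 - 4*C*D*Ee^2*P^4 - 3*C*D*Ee^2*Ff*P^3 - 2*C*D*Ee^2*Ff^2*P^2 - 1*C*D*Ee^2*Ff^3*P - 2*C*D*Ee^3*P - 1*C*D*Ee^3*Ff + 1*C*D*Ee^4*P^2 + 1*C*D*Ee^4*Ff*P + 1*C*D*Ee^4*Ff^2 + 13*ν*Ff*P^3 + 7*ν*Ff^2*P^2 + 3*ν*Ff^3*P + 1*ν*Ff^4 - 3*ν*Ee*P - 4*ν*Ee*Ff*P^4 - 3*ν*Ee*Ff^2*P^3 - 2*ν*Ee*Ff^3*P^2 - 1*ν*Ee*Ff^4*P + 3*ν*Ee^2*P^2 - 1*ν*Ee^2*Ff^2 - 1*ν*Ee^3*P^3 + 3*ν*D*P + 1*ν*D*Ff - 3*ν*D*Ee*P^2 + 1*ν*D*Ee*Ff*P + 1*ν*D*Ee^2*P^3 - 2*ν*D*Ee^2*Ff*P^2 - 1*ν*D*Ee^2*Ff^2*P + 1*ν*D*Ee^3*Ff*P^3 + 1*ν*D*Ee^3*Ff^2*P^2 + 1*ν*D*Ee^3*Ff^3*P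 - 13*ν*C*P^3 - 7*ν*C*Ff*P^2 - 3*ν*C*Ff^2*P - 1*ν*C*Ff^3 - 1*ν*C*Ee + 4*ν*C*Ee*P^4 - 10*ν*C*Ee*Ff*P^3 - 5*ν*C*Ee*Ff^2*P^2 - 2*ν*C*Ee*Ff^3*P - 1*ν*C*Ee*Ff^4 + 2*ν*C*Ee^2*P + 4*ν*C*Ee^2*Ff*P^4 + 3*ν*C*Ee^2*Ff^2*P^3 + 2*ν*C*Ee^2*Ff^3*P^2 + 1*ν*C*Ee^2*Ff^4*P - 1*ν*C*Ee^3*P^2 + 1*ν*C*Ee^3*Ff*P + 1*ν*C*Ee^3*Ff^2 - 1*ν*C*Ee^4*Ff*P^2 - 1*ν*C*Ee^4*Ff^2*P - 1*ν*C*Ee^4*Ff^3 + 13*ν*C*D*Ff*P^3 + 7*ν*C*D*Ff^2*P^2 + 3*ν*C*D*Ff^3*P + 1*ν*C*D*Ff^4 - 3*ν*C*D*Ee*P - 4*ν*C*D*Ee*Ff*P^4 - 3*ν*C*D*Ee*Ff^2*P^3 - 2*ν*C*D*Ee*Ff^3*P^2 - 1*ν*C*D*Ee*Ff^4*P + 3*ν*C*D*Ee^2*P^2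 - 1*ν*C*D*Ee^2*Ff^2 - 1*ν*C*D*Ee^3*P^3 - 3*ν^2*Ff*P - 1*ν^2*Ff^2 + 3*ν^2*Ee*Ff*P^2 + 2*ν^2*Ee*Ff^2*P + 1*ν^2*Ee*Ff^3 - 1*ν^2*Ee^2*Ff*P^3 - 1*ν^2*Ee^2*Ff^2*P^2 - 1*ν^2*Ee^2*Ff^3*P + 3*ν^2*C*P + 1*ν^2*C*Ff - 3*ν^2*C*Ee*P^2 + 1*ν^2*C*Ee*Ff*P + 1*ν^2*C*Ee^2*P^3 - 2*ν^2*C*Ee^2*Ff*P^2 - 1*ν^2*C*Ee^2*Ff^2*P + 1*ν^2*C*Ee^3*Ff*P^3 + 1*ν^2*C*Ee^3*Ff^2*P^2 + 1*ν^2*C*Ee^3*Ff^3*P - 3*ν^2*C*D*Ff*P - 1*ν^2*C*D*Ff^2 + 3*ν^2*C*D*Ee*Ff*P^2 + 2*ν^2*C*D*Ee*Ff^2*P + 1*ν^2*C*D*Ee*Ff^3 - 1*ν^2*C*D*Ee^2*Ff*P^3 - 1*ν^2*C*D*Ee^2*Ff^2*P^2 - 1*ν^2*C*D*Ee^2*Ff^3*P)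 * h3 + (-13*P^4 + 6*Ff*P^3 + 13*Ff*P^4*Q + 4*Ff^2*P^2 + 7*Ff^2*P^3*Q + 2*Ff^3*P + 3*Ff^3*P^2*Q + 1*Ff^4 + 1*Ff^4*P*Q - 1*Ee*P + 4*Ee*P^5 + 1*Ee*Ff + 1*Ee*Ff*P*Q - 14*Ee*Ff*P^4 - 4*Ee*Ff*P^5*Q - 8*Ee*Ff^2*P^3 - 3*Ee*Ff^2*P^4*Q - 4*Ee*Ff^3*P^2 - 2*Ee*Ff^3*P^3*Q - 2*Ee*Ff^4*P - 1*Ee*Ff^4*P^2*Q + 2*Ee^2*P^2 - 2*Ee^2*Ff*P - 2*Ee^2*Ff*P^2*Q + 4*Ee^2*Ff*P^5 - 1*Ee^2*Ff^2*P*Q + 3*Ee^2*Ff^2*P^4 - 1*Ee^2*Ff^3*Q + 2*Ee^2*Ff^3*P^3 + 1*Ee^2*Ff^4*P^2 - 1*Ee^3*P^3 + 2*Ee^3*Ff*P^2 + 1*Ee^3*Ff*P^3*Q + 1*Ee^3*Ff^2*P + 1*Ee^3*Ff^2*P^2*Q + 1*Ee^3*Ff^3 + 1*Ee^3*Ff^3*P*Q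 - 1*Ee^4*Ff*P^3 - 1*Ee^4*Ff^2*P^2 - 1*Ee^4*Ff^3*P + 3*ν*P^2 - 13*ν*P^3*Q - 2*ν*Ff*P - 10*ν*Ff*P^2*Q - 1*ν*Ff^2 - 4*ν*Ff^2*P*Q - 1*ν*Ff^3*Q - 1*ν*Ee*Q + 10*ν*Ee*P^3 + 17*ν*Ee*P^4*Q + 11*ν*Ee*Ff*P^2 + 5*ν*Ee*Ff^2*P + 1*ν*Ee*Ff^3 + 1*ν*Ee^2 + 3*ν*Ee^2*P*Q - 3*ν*Ee^2*P^4 - 4*ν*Ee^2*P^5*Q - 6*ν*Ee^2*Ff*P^3 - 4*ν*Ee^2*Ff^2*P^2 - 2*ν*Ee^2*Ff^3*P - 1*ν*Ee^2*Ff^4 - 2*ν*Ee^3*P - 3*ν*Ee^3*P^2*Q - 1*ν*Ee^3*Ff + 1*ν*Ee^3*Ff*P^4 + 1*ν*Ee^3*Ff^2*P^3 + 1*ν*Ee^3*Ff^3*P^2 + 1*ν*Ee^3*Ff^4*P + 1*ν*Ee^4*P^2 + 1*ν*Ee^4*P^3*Q + 1*ν*Ee^4*Ff*P + 3*ν^2*P*Q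 + 1*ν^2*Ff*Q - 3*ν^2*Ee*P - 6*ν^2*Ee*P^2*Q - 1*ν^2*Ee*Ff + 3*ν^2*Ee^2*P^2 + 4*ν^2*Ee^2*P^3*Q + 2*ν^2*Ee^2*Ff*P + 1*ν^2*Ee^2*Ff^2 - 1*ν^2*Ee^3*P^3 - 1*ν^2*Ee^3*P^4*Q - 1*ν^2*Ee^3*Ff*P^2 - 1*ν^2*Ee^3*Ff^2*P) * h2
  have hmid : (C^2-ν)*(ν*C^2-1)/C*(1/(Ee*C-1))*(D*(ν*Ff+Ee)-(1+Ee*Ff)*ν) + (D^2-ν)*(ν*D^2-1)/D*(1/(Ff*D-1))*(C*(ν*Ff+Ee)-(1+Ee*Ff)) - (Ee^2-ν)*(ν*Ee^2-1)/Ee*(1/(Ee*C-1))*((1+C*D)-Ff*(ν*C+D)) - (Ff^2-ν)*(ν*Ff^2-1)/Ff*(1/(Ff*D-1))*(ν*(1+C*D)-Ee*(ν*C+D)) = (D^2-ν)*(ν*D+C)*(C*(ν*Ff+Ee)-(1+Ee*Ff))/(C*D) - (ν*Ff^2-1)*(ν*Ee+Ff)*(ν*(1+C*D)-Ee*(ν*C+D))/(Ee*Ff)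 := by
    have nEC' : C * Ee - 1 ≠ 0 := by rwa [mul_comm]
    have nFD' : D * Ff - 1 ≠ 0 := by rwa [mul_comm]
    field_simp
    apply mul_left_cancel₀ (mul_ne_zero (mul_ne_zero (mul_ne_zero nC nD) (mul_ne_zero nE nF)) (mul_ne_zero nEC' nFD'))
    linear_combination (-1*C^2*D^2*Ee^2*Ff^2 + 3*C^2*D^3*Ee^2*Ff^3 - 2*C^2*D^4*Ee^2*Ff^4 + 1*C^3*D^2*Ee^3*Ff^2 - 4*C^3*D^3*Ee^3*Ff^3 + 3*C^3*D^4*Ee^3*Ff^4 + 1*C^4*D^3*Ee^4*Ff^3 - 1*C^4*D^4*Ee^4*Ff^4 - 1*ν*C*D^3*Ee^2*Ff^2 + 2*ν*C*D^4*Ee^2*Ff^3 - 1*ν*C*D^5*Ee^2*Ff^4 + 1*ν*C^2*D^2*Ee*Ff^3 + 1*ν*C^2*D^2*Ee^2*Ff^4 + 1*ν*C^2*D^2*Ee^4*Ff^2 - 2*ν*C^2*D^3*Ee*Ff^4 - 1*ν*C^2*D^3*Ee^2*Ff^5 + 2*ν*C^2*D^3*Ee^3*Ff^2 - 2*ν*C^2*D^3*Ee^4*Ff^3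 + 1*ν*C^2*D^4*Ee*Ff^5 - 1*ν*C^2*D^4*Ee^2*Ff^2 - 4*ν*C^2*D^4*Ee^3*Ff^3 + 1*ν*C^2*D^4*Ee^4*Ff^4 + 1*ν*C^2*D^5*Ee^2*Ff^3 + 2*ν*C^2*D^5*Ee^3*Ff^4 - 2*ν*C^3*D^2*Ee^2*Ff^3 - 2*ν*C^3*D^2*Ee^3*Ff^4 - 1*ν*C^3*D^2*Ee^5*Ff^2 + 4*ν*C^3*D^3*Ee^2*Ff^4 + 2*ν*C^3*D^3*Ee^3*Ff^5 - 1*ν*C^3*D^3*Ee^4*Ff^2 + 2*ν*C^3*D^3*Ee^5*Ff^3 - 2*ν*C^3*D^4*Ee^2*Ff^5 + 2*ν*C^3*D^4*Ee^3*Ff^2 + 2*ν*C^3*D^4*Ee^4*Ff^3 - 1*ν*C^3*D^4*Ee^5*Ff^4 - 2*ν*C^3*D^5*Ee^3*Ff^3 - 1*ν*C^3*D^5*Ee^4*Ff^4 - 1*ν*C^4*D^2*Ee^2*Ff^2 + 1*ν*C^4*D^2*Ee^3*Ff^3 + 1*ν*C^4*D^2*Ee^4*Ff^4 + 2*ν*C^4*D^3*Ee^2*Ff^3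 - 2*ν*C^4*D^3*Ee^3*Ff^4 - 1*ν*C^4*D^3*Ee^4*Ff^5 - 1*ν*C^4*D^4*Ee^2*Ff^4 + 1*ν*C^4*D^4*Ee^3*Ff^5 - 1*ν*C^4*D^4*Ee^4*Ff^2 + 1*ν*C^4*D^5*Ee^4*Ff^3 + 1*ν*C^5*D^2*Ee^3*Ff^2 - 2*ν*C^5*D^3*Ee^3*Ff^3 + 1*ν*C^5*D^4*Ee^3*Ff^4 + 1*ν^2*C^2*D^2*Ee^2*Ff^2 - 3*ν^2*C^2*D^3*Ee^2*Ff^3 + 2*ν^2*C^2*D^4*Ee^2*Ff^4 - 1*ν^2*C^3*D^2*Ee^3*Ff^2 + 4*ν^2*C^3*D^3*Ee^3*Ff^3 - 3*ν^2*C^3*D^4*Ee^3*Ff^4 - 1*ν^2*C^4*D^3*Ee^4*Ff^3 + 1*ν^2*C^4*D^4*Ee^4*Ff^4) * h2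
  linear_combination hmid - hpast + hfut
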